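/- For c ≥ 7, e_p(c) = e_p(c−2) + 2·e_p(c−4), where e_p(c) counts palindromic or anti-palindromic even-length sequences of nonzero integers with 2·Σ|a_i| − ℓ = c. -/
import Mathlib


open Classical

/-- The number of sign changes in a finite sequence of integers. -/
def signChanges (l : List ℤ) : ℕ :=
  ((l.zip l.tail).filter (fun p => p.1 * p.2 < 0)).length

/-- The sum of the absolute values of the entries. -/
def absSum (l : List ℤ) : ℕ := (l.map Int.natAbs).sum

/-- An even continued fraction representation: a nonempty even-length
sequence of nonzero integers. -/
def IsECF (l : List ℤ) : Prop :=
  l ≠ [] ∧ Even l.length ∧ ∀ x ∈ l, x ≠ 0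

/-- Palindromic or anti-palindromic sequences. -/
def IsPalOrAnti (l : List ℤ) : Prop :=
  l.reverse = l ∨ l.reverse = l.map (fun x => -x)

/-- The set `E(c)` of even continued fractions with crossing number `c`. -/
def Ecross (c : ℕ) : Set (List ℤ) :=
  {l | IsECF l ∧ (2 * absSum l : ℤ) - signChanges l = c}

/-- The set `E(c,b)` of even continued fractions with crossing number `c`
and braid index `b`. -/
def Eset (c b : ℕ) : Set (List ℤ) :=
  {l | IsECF l ∧ (2 * absSum l : ℤ) - signChanges l = c ∧
    (absSum l : ℤ) - signChanges l + 1 = b}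

noncomputable def e (c b : ℕ) : ℕ := (Eset c b).ncard

noncomputable def eTot (c : ℕ) : ℕ := (Ecross c).ncard

noncomputable def ep (c b : ℕ) : ℕ := (Eset c b ∩ {l | IsPalOrAnti l}).ncard

noncomputable def epTot (c : ℕ) : ℕ := (Ecross c ∩ {l | IsPalOrAnti l}).ncard

def sc : List ℤ → ℕ
  | a :: b :: t => (if a * b < 0 then 1 else 0) + sc (b :: t)
  | _ => 0

lemma sc_eq (l : List ℤ) : sc l = signChanges l := by
  match l with
  | [] => rfl
  | [a] => rfl
  | a :: b :: t =>
    have ih := sc_eq (b :: t)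
    simp only [sc, signChanges] at *
    simp only [List.zip, List.tail, List.zipWith, List.filter_cons]
    by_cases h : a * b < 0 <;> simp [List.zip, h, ih, Nat.add_comm]

lemma absSum_cons (a : ℤ) (t : List ℤ) : absSum (a :: t) = a.natAbs + absSum t := by
  simp [absSum]

lemma absSum_append (u v : List ℤ) : absSum (u ++ v) = absSum u + absSum v := by
  simp [absSum]

lemma absSum_reverse (l : List ℤ) : absSum l.reverse = absSum l := by
  simp [absSum, List.sum_reverse]

lemma absSum_neg (l : List ℤ) : absSum (l.map (fun x => -x)) = absSum l := by
  simp [absSum, Function.comp_def]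

lemma sc_neg (l : List ℤ) : sc (l.map (fun x => -x)) = sc l := by
  match l with
  | [] => rfl
  | [a] => rfl
  | a :: b :: t =>
    have ih := sc_neg (b :: t)
    simp only [List.map] at *
    rw [sc, sc, show (-a) * (-b) = a * b by ring, ih]

lemma sc_append (u : List ℤ) (x y : ℤ) (v : List ℤ) :
    sc (u ++ x :: y :: v) = sc (u ++ [x]) + sc (y :: v) + (if x * y < 0 then 1 else 0) := by
  match u with
  | [] => simp only [List.nil_append]; rw [sc]; simp [sc]; omega
  | [a] =>
    simp only [List.cons_append, List.nil_append]
    rw [sc, sc, sc]; simp [sc]; omega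
  | a :: b :: u' =>
    have ih := sc_append (b :: u') x y v
    simp only [List.cons_append] at *
    rw [sc, sc, ih]
    omega

lemma sc_reverse (l : List ℤ) : sc l.reverse = sc l := by
  match l with
  | [] => rfl
  | [a] => rfl
  | a :: b :: t =>
    have ih := sc_reverse (b :: t)
    rw [show (a :: b :: t).reverse = t.reverse ++ b :: a :: [] by simp]
    rw [sc_append, show t.reverse ++ [b] = (b :: t).reverse by simp, ih, sc]
    rw [show b * a = a * b by ring]
    simp [sc]
    omega

/-! ### Sign helpers -/

lemma sign_cases (a : ℤ) (h : a ≠ 0) : a.sign = 1 ∧ 0 < a ∨ a.sign = -1 ∧ a < 0 := by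
  rcases lt_or_gt_of_ne h with h' | h'
  · exact Or.inr ⟨Int.sign_eq_neg_one_of_neg h', h'⟩
  · exact Or.inl ⟨Int.sign_eq_one_of_pos h', h'⟩

lemma neg_sign_mul_self_neg (a : ℤ) (h : a ≠ 0) : -a.sign * a < 0 := by
  rcases sign_cases a h with ⟨hs, hp⟩ | ⟨hs, hp⟩ <;> rw [hs] <;> nlinarith

lemma sign_mul_self_not_neg (a : ℤ) (h : a ≠ 0) : ¬ a.sign * a < 0 := by
  rcases sign_cases a h with ⟨hs, hp⟩ | ⟨hs, hp⟩ <;> rw [hs] <;> nlinarith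

lemma natAbs_neg_sign (a : ℤ) (h : a ≠ 0) : (-a.sign).natAbs = 1 := by
  rcases sign_cases a h with ⟨hs, _⟩ | ⟨hs, _⟩ <;> rw [hs] <;> rfl

lemma natAbs_sign (a : ℤ) (h : a ≠ 0) : a.sign.natAbs = 1 := by
  rcases sign_cases a h with ⟨hs, _⟩ | ⟨hs, _⟩ <;> rw [hs] <;> rfl

lemma add_sign_ne_zero (a : ℤ) (h : a ≠ 0) : a + a.sign ≠ 0 := by
  rcases sign_cases a h with ⟨hs, hp⟩ | ⟨hs, hp⟩ <;> rw [hs] <;> omega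

lemma natAbs_add_sign (a : ℤ) (h : a ≠ 0) : (a + a.sign).natAbs = a.natAbs + 1 := by
  rcases sign_cases a h with ⟨hs, hp⟩ | ⟨hs, hp⟩ <;> rw [hs] <;> omega

lemma prod_neg_iff_add (a b : ℤ) (h : a ≠ 0) : ((a + a.sign) * b < 0 ↔ a * b < 0) := by
  rcases sign_cases a h with ⟨hs, hp⟩ | ⟨hs, hp⟩ <;> rw [hs] <;>
    rw [mul_neg_iff, mul_neg_iff] <;> omega

lemma sub_sign_ne_zero (a : ℤ) (h : 2 ≤ a.natAbs) : a - a.sign ≠ 0 := by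
  have h0 : a ≠ 0 := by omega
  rcases sign_cases a h0 with ⟨hs, hp⟩ | ⟨hs, hp⟩ <;> rw [hs] <;> omega

lemma natAbs_sub_sign (a : ℤ) (h : 2 ≤ a.natAbs) : (a - a.sign).natAbs = a.natAbs - 1 := by
  have h0 : a ≠ 0 := by omega
  rcases sign_cases a h0 with ⟨hs, hp⟩ | ⟨hs, hp⟩ <;> rw [hs] <;> omega

lemma prod_neg_iff_sub (a b : ℤ) (h : 2 ≤ a.natAbs) : ((a - a.sign) * b < 0 ↔ a * b < 0) := by
  have h0 : a ≠ 0 := by omega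
  rcases sign_cases a h0 with ⟨hs, hp⟩ | ⟨hs, hp⟩ <;> rw [hs] <;>
    rw [mul_neg_iff, mul_neg_iff] <;> omega

lemma sign_sub_sign (a : ℤ) (h : 2 ≤ a.natAbs) : (a - a.sign).sign = a.sign := by
  have h0 : a ≠ 0 := by omega
  rcases sign_cases a h0 with ⟨hs, hp⟩ | ⟨hs, hp⟩ <;> rw [hs]
  · rw [Int.sign_eq_one_of_pos (by omega)]
  · rw [Int.sign_eq_neg_one_of_neg (by omega)]

lemma add_sign_inj (a b : ℤ) (ha : a ≠ 0) (hb : b ≠ 0)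
    (h : a + a.sign = b + b.sign) : a = b := by
  rcases sign_cases a ha with ⟨hs, hp⟩ | ⟨hs, hp⟩ <;>
    rcases sign_cases b hb with ⟨hs', hp'⟩ | ⟨hs', hp'⟩ <;> rw [hs, hs'] at h <;> omega

lemma eq_neg_sign_of (a b : ℤ) (ha : a.natAbs = 1) (hb : b ≠ 0) (h : a * b < 0) :
    a = -b.sign := by
  rcases sign_cases b hb with ⟨hs, hp⟩ | ⟨hs, hp⟩ <;> rw [hs] <;>
    rw [mul_neg_iff] at h <;> omega

lemma eq_sign_of (a b : ℤ) (ha : a.natAbs = 1) (hb : b ≠ 0) (h : ¬ a * b < 0) :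
    a = b.sign := by
  rcases sign_cases b hb with ⟨hs, hp⟩ | ⟨hs, hp⟩ <;> rw [hs] <;>
    rw [mul_neg_iff, not_or, not_and_or, not_and_or] at h <;> omega

/-! ### The half-sequence set -/

def Sset (k : ℕ) : Set (List ℤ) :=
  {l | l ≠ [] ∧ (∀ x ∈ l, x ≠ 0) ∧ (2 * absSum l : ℤ) - sc l = k}

lemma sc_lt_length (l : List ℤ) (h : l ≠ []) : sc l < l.length := by
  match l with
  | [a] => simp [sc]
  | a :: b :: t =>
    have ih := sc_lt_length (b :: t) (by simp)
    rw [sc]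
    simp only [List.length_cons] at *
    split <;> omega

lemma length_le_absSum (l : List ℤ) (h : ∀ x ∈ l, x ≠ 0) : l.length ≤ absSum l := by
  induction l with
  | nil => simp [absSum]
  | cons a t ih =>
    have ha : a ≠ 0 := h a (by simp)
    have : 1 ≤ a.natAbs := by omega
    have := ih (fun x hx => h x (by simp [hx]))
    rw [absSum_cons]
    simp only [List.length_cons]
    omega

lemma mem_absSum_bound (l : List ℤ) (x : ℤ) (hx : x ∈ l) : x.natAbs ≤ absSum l := by
  induction l with
  | nil => simp at hx
  | cons a t ih =>
    rw [absSum_cons]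
    rcases List.mem_cons.mp hx with rfl | hx'
    · omega
    · have := ih hx'; omega

lemma finite_bounded (k : ℕ) :
    {l : List ℤ | l.length ≤ k ∧ ∀ x ∈ l, x.natAbs ≤ k}.Finite := by
  have h : {l : List ↥(Finset.Icc (-(k : ℤ)) k) | l.length ≤ k}.Finite :=
    List.finite_length_le _ k
  apply Set.Finite.subset (h.image (List.map Subtype.val))
  rintro l ⟨hlen, hmem⟩
  have H : ∀ x ∈ l, x ∈ Finset.Icc (-(k : ℤ)) (k : ℤ) := by
    intro x hx
    have := hmem x hx
    simp only [Finset.mem_Icc]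
    omega
  refine ⟨l.pmap (fun x hx => (⟨x, hx⟩ : ↥(Finset.Icc (-(k : ℤ)) (k : ℤ)))) H, ?_, ?_⟩
  · simpa [List.length_pmap] using hlen
  · simp [List.map_pmap]

lemma Sset_finite (k : ℕ) : (Sset k).Finite := by
  apply Set.Finite.subset (finite_bounded k)
  rintro l ⟨hne, hnz, heq⟩
  have h1 := sc_lt_length l hne
  have h2 := length_le_absSum l hnz
  have h3 : absSum l ≤ k := by omega
  exact ⟨by omega, fun x hx => le_trans (mem_absSum_bound l x hx) h3⟩

/-! ### The three maps -/

def phi1 (l : List ℤ) : List ℤ := (-(l.headI.sign)) :: l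
def phi2 (l : List ℤ) : List ℤ := l.headI.sign :: l
def phi3 (l : List ℤ) : List ℤ := (l.headI + l.headI.sign) :: l.tail

lemma phi1_mem {k : ℕ} {l : List ℤ} (h : l ∈ Sset k) : phi1 l ∈ Sset (k + 1) := by
  obtain ⟨hne, hnz, heq⟩ := h
  match l with
  | a :: t =>
    have ha : a ≠ 0 := hnz a (by simp)
    have hs : (a :: t).headI = a := rfl
    refine ⟨by simp [phi1], ?_, ?_⟩
    · intro x hx
      rcases List.mem_cons.mp hx with rfl | hx'
      · rw [hs]
        rcases sign_cases a ha with ⟨hs', _⟩ | ⟨hs', _⟩ <;> rw [hs'] <;> decide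
      · exact hnz x hx'
    · show (2 * absSum ((-(a :: t).headI.sign) :: a :: t) : ℤ) - sc ((-(a :: t).headI.sign) :: a :: t) = _
      rw [hs, absSum_cons, sc, if_pos (neg_sign_mul_self_neg a ha), natAbs_neg_sign a ha]
      push_cast
      push_cast at heq
      rw [absSum_cons] at heq
      push_cast at heq
      rw [absSum_cons]
      push_cast
      linarith

lemma phi2_mem {k : ℕ} {l : List ℤ} (h : l ∈ Sset k) : phi2 l ∈ Sset (k + 2) := by
  obtain ⟨hne, hnz, heq⟩ := h
  match l with
  | a :: t =>
    have ha : a ≠ 0 := hnz a (by simp)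
    have hs : (a :: t).headI = a := rfl
    refine ⟨by simp [phi2], ?_, ?_⟩
    · intro x hx
      rcases List.mem_cons.mp hx with rfl | hx'
      · rw [hs]
        rcases sign_cases a ha with ⟨hs', _⟩ | ⟨hs', _⟩ <;> rw [hs'] <;> decide
      · exact hnz x hx'
    · show (2 * absSum ((a :: t).headI.sign :: a :: t) : ℤ) - sc ((a :: t).headI.sign :: a :: t) = _
      rw [hs, absSum_cons, sc, if_neg (sign_mul_self_not_neg a ha), natAbs_sign a ha]
      push_cast
      push_cast at heq
      linarith

lemma phi3_mem {k : ℕ} {l : List ℤ} (h : l ∈ Sset k) : phi3 l ∈ Sset (k + 2) := by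
  obtain ⟨hne, hnz, heq⟩ := h
  match l with
  | a :: t =>
    have ha : a ≠ 0 := hnz a (by simp)
    have hphi : phi3 (a :: t) = (a + a.sign) :: t := rfl
    rw [hphi]
    refine ⟨by simp, ?_, ?_⟩
    · intro x hx
      rcases List.mem_cons.mp hx with rfl | hx'
      · exact add_sign_ne_zero a ha
      · exact hnz x (by simp [hx'])
    · have hsc : sc ((a + a.sign) :: t) = sc (a :: t) := by
        match t with
        | [] => rfl
        | b :: t' =>
          rw [sc, sc]
          congr 1
          simp only [prod_neg_iff_add a b ha]
      have habs : absSum ((a + a.sign) :: t) = absSum (a :: t) + 1 := by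
        rw [absSum_cons, absSum_cons, natAbs_add_sign a ha]
        omega
      rw [hsc, habs]
      push_cast
      push_cast at heq
      linarith

lemma phi1_shape {j : ℕ} {x : List ℤ} (h : x ∈ phi1 '' Sset j) :
    ∃ s a t, x = s :: a :: t ∧ s.natAbs = 1 ∧ s * a < 0 := by
  obtain ⟨l, hl, rfl⟩ := h
  obtain ⟨hne, hnz, -⟩ := hl
  match l with
  | a :: t =>
    have ha : a ≠ 0 := hnz a (by simp)
    exact ⟨-(a.sign), a, t, rfl, natAbs_neg_sign a ha, neg_sign_mul_self_neg a ha⟩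

lemma phi2_shape {j : ℕ} {x : List ℤ} (h : x ∈ phi2 '' Sset j) :
    ∃ s a t, x = s :: a :: t ∧ s.natAbs = 1 ∧ ¬ s * a < 0 := by
  obtain ⟨l, hl, rfl⟩ := h
  obtain ⟨hne, hnz, -⟩ := hl
  match l with
  | a :: t =>
    have ha : a ≠ 0 := hnz a (by simp)
    exact ⟨a.sign, a, t, rfl, natAbs_sign a ha, sign_mul_self_not_neg a ha⟩

lemma phi3_shape {j : ℕ} {x : List ℤ} (h : x ∈ phi3 '' Sset j) :
    ∃ a t, x = a :: t ∧ 2 ≤ a.natAbs := by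
  obtain ⟨l, hl, rfl⟩ := h
  obtain ⟨hne, hnz, -⟩ := hl
  match l with
  | a :: t =>
    have ha : a ≠ 0 := hnz a (by simp)
    refine ⟨a + a.sign, t, rfl, ?_⟩
    rw [natAbs_add_sign a ha]
    omega

lemma Sset_eq_union (k : ℕ) (hk : 3 ≤ k) :
    Sset k = phi1 '' Sset (k - 1) ∪ (phi2 '' Sset (k - 2) ∪ phi3 '' Sset (k - 2)) := by
  apply Set.eq_of_subset_of_subset
  · rintro l ⟨hne, hnz, heq⟩
    match l with
    | a :: t =>
      have ha : a ≠ 0 := hnz a (by simp)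
      by_cases h2 : 2 ≤ a.natAbs
      · -- phi3 case
        right; right
        have hmem : (a - a.sign) :: t ∈ Sset (k - 2) := by
          refine ⟨by simp, ?_, ?_⟩
          · intro x hx
            rcases List.mem_cons.mp hx with rfl | hx'
            · exact sub_sign_ne_zero a h2
            · exact hnz x (by simp [hx'])
          · have hsc : sc ((a - a.sign) :: t) = sc (a :: t) := by
              match t with
              | [] => rfl
              | b :: t' =>
                rw [sc, sc]
                congr 1
                simp only [prod_neg_iff_sub a b h2]
            have habs : (absSum ((a - a.sign) :: t) : ℤ) = absSum (a :: t) - 1 := by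
              rw [absSum_cons, absSum_cons, natAbs_sub_sign a h2]
              push_cast [Nat.cast_sub (by omega : 1 ≤ a.natAbs)]
              omega
            rw [hsc]
            rw [Nat.cast_sub (by omega : 2 ≤ k)]
            push_cast
            push_cast at heq habs
            linarith
        refine ⟨(a - a.sign) :: t, hmem, ?_⟩
        show ((a - a.sign) + (a - a.sign).sign) :: t = a :: t
        rw [sign_sub_sign a h2]
        congr 1
        ring
      · have h1 : a.natAbs = 1 := by omega
        match t with
        | [] =>
          exfalso
          have : absSum [a] = 1 := by rw [absSum_cons]; simp [absSum]; omega
          rw [this] at heq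
          simp [sc] at heq
          omega
        | b :: t' =>
          have hb : b ≠ 0 := hnz b (by simp)
          have hmemt : ∀ x ∈ b :: t', x ≠ 0 := fun x hx => hnz x (by simp [List.mem_cons] at hx ⊢; tauto)
          have habs : (absSum (a :: b :: t') : ℤ) = 1 + absSum (b :: t') := by
            rw [absSum_cons, h1]; push_cast; ring
          by_cases hab : a * b < 0
          · left
            have hsc : sc (a :: b :: t') = 1 + sc (b :: t') := by rw [sc, if_pos hab]
            refine ⟨b :: t', ⟨by simp, hmemt, ?_⟩, ?_⟩
            · rw [Nat.cast_sub (by omega : 1 ≤ k)]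
              rw [hsc, habs] at heq
              push_cast at heq ⊢
              linarith
            · show (-(b :: t').headI.sign) :: b :: t' = a :: b :: t'
              have : (b :: t').headI = b := rfl
              rw [this, ← eq_neg_sign_of a b h1 hb hab]
          · right; left
            have hsc : sc (a :: b :: t') = 0 + sc (b :: t') := by rw [sc, if_neg hab]
            refine ⟨b :: t', ⟨by simp, hmemt, ?_⟩, ?_⟩
            · rw [Nat.cast_sub (by omega : 2 ≤ k)]
              rw [hsc, habs] at heq
              push_cast at heq ⊢
              linarith
            · show (b :: t').headI.sign :: b :: t' = a :: b :: t'
              have : (b :: t').headI = b := rfl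
              rw [this, ← eq_sign_of a b h1 hb hab]
  · rintro l (hl | hl | hl)
    · obtain ⟨m, hm, rfl⟩ := hl
      have h := phi1_mem hm
      rwa [show k - 1 + 1 = k by omega] at h
    · obtain ⟨m, hm, rfl⟩ := hl
      have h := phi2_mem hm
      rwa [show k - 2 + 2 = k by omega] at h
    · obtain ⟨m, hm, rfl⟩ := hl
      have h := phi3_mem hm
      rwa [show k - 2 + 2 = k by omega] at h

theorem N_rec (k : ℕ) (hk : 3 ≤ k) :
    (Sset k).ncard = (Sset (k - 1)).ncard + 2 * (Sset (k - 2)).ncard := by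
  have fin1 := Sset_finite (k - 1)
  have fin2 := Sset_finite (k - 2)
  -- disjointness
  have d12 : Disjoint (phi1 '' Sset (k - 1)) (phi2 '' Sset (k - 2)) := by
    rw [Set.disjoint_left]
    intro x h1 h2
    obtain ⟨s, a, t, rfl, hs1, hlt⟩ := phi1_shape h1
    obtain ⟨s', a', t', heq, hs1', hlt'⟩ := phi2_shape h2
    simp only [List.cons.injEq] at heq
    obtain ⟨rfl, rfl, rfl⟩ := heq
    exact hlt' hlt
  have d13 : Disjoint (phi1 '' Sset (k - 1)) (phi3 '' Sset (k - 2)) := by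
    rw [Set.disjoint_left]
    intro x h1 h2
    obtain ⟨s, a, t, rfl, hs1, hlt⟩ := phi1_shape h1
    obtain ⟨a', t', heq, h2'⟩ := phi3_shape h2
    simp only [List.cons.injEq] at heq
    omega
  have d23 : Disjoint (phi2 '' Sset (k - 2)) (phi3 '' Sset (k - 2)) := by
    rw [Set.disjoint_left]
    intro x h1 h2
    obtain ⟨s, a, t, rfl, hs1, hlt⟩ := phi2_shape h1
    obtain ⟨a', t', heq, h2'⟩ := phi3_shape h2
    simp only [List.cons.injEq] at heq
    omega
  have inj1 : Set.InjOn phi1 (Sset (k - 1)) := by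
    intro x hx y hy h
    exact (List.cons.injEq _ _ _ _ ▸ h).2
  have inj2 : Set.InjOn phi2 (Sset (k - 2)) := by
    intro x hx y hy h
    exact (List.cons.injEq _ _ _ _ ▸ h).2
  have inj3 : Set.InjOn phi3 (Sset (k - 2)) := by
    rintro x ⟨hxne, hxnz, -⟩ y ⟨hyne, hynz, -⟩ h
    match x, y with
    | a :: t, b :: u =>
      have ha : a ≠ 0 := hxnz a (by simp)
      have hb : b ≠ 0 := hynz b (by simp)
      have h' : (a + a.sign) :: t = (b + b.sign) :: u := h
      simp only [List.cons.injEq] at h'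
      obtain ⟨h1, rfl⟩ := h'
      rw [add_sign_inj a b ha hb h1]
  rw [Sset_eq_union k hk]
  rw [Set.ncard_union_eq (by exact Set.disjoint_union_right.mpr ⟨d12, d13⟩)
    (fin1.image _) ((fin2.image _).union (fin2.image _))]
  rw [Set.ncard_union_eq d23 (fin2.image _) (fin2.image _)]
  rw [Set.ncard_image_of_injOn inj1, Set.ncard_image_of_injOn inj2,
    Set.ncard_image_of_injOn inj3]
  ring

/-! ### decomposition of (anti)palindromes -/

lemma halves (l : List ℤ) (hne : l ≠ []) (hev : Even l.length) :
    ∃ h d : List ℤ, h ≠ [] ∧ l = h ++ d ∧ d.reverse.length = h.length ∧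
      (l.reverse = d.reverse ++ h.reverse) := by
  obtain ⟨m, hm⟩ := hev
  have hm1 : 1 ≤ m := by
    rcases l with _ | ⟨a, t⟩
    · exact absurd rfl hne
    · simp at hm; omega
  refine ⟨l.take m, l.drop m, ?_, (l.take_append_drop m).symm, ?_, ?_⟩
  · intro h
    have h' := congrArg List.length h
    rw [List.length_take] at h'
    simp only [List.length_nil] at h'
    omega
  · rw [List.length_reverse, List.length_drop, List.length_take]
    omega
  · conv_lhs => rw [← l.take_append_drop m]
    rw [List.reverse_append]

lemma pal_decomp (l : List ℤ) (hne : l ≠ []) (hev : Even l.length)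
    (hpal : l.reverse = l) : ∃ h, h ≠ [] ∧ l = h ++ h.reverse := by
  obtain ⟨h, d, hh, hld, hlen, hrev⟩ := halves l hne hev
  have key : d.reverse ++ h.reverse = h ++ d := by rw [← hrev, hpal, hld]
  have h2 := List.append_inj key (by rw [hlen])
  refine ⟨h, hh, ?_⟩
  rw [hld, ← h2.1]
  simp

lemma anti_decomp (l : List ℤ) (hne : l ≠ []) (hev : Even l.length)
    (hanti : l.reverse = l.map (fun x => -x)) :
    ∃ h, h ≠ [] ∧ l = h ++ (h.reverse.map (fun x => -x)) := by
  obtain ⟨h, d, hh, hld, hlen, hrev⟩ := halves l hne hev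
  have key : d.reverse ++ h.reverse = (h.map (fun x => -x)) ++ (d.map (fun x => -x)) := by
    rw [← hrev, hanti, hld, List.map_append]
  have h2 := List.append_inj key (by rw [hlen]; simp)
  refine ⟨h, hh, ?_⟩
  rw [hld]
  congr 1
  have hd : d = (h.map (fun x => -x)).reverse := by
    rw [← h2.1]; simp
  rw [hd, List.map_reverse]

lemma sc_pal (h : List ℤ) (hne : h ≠ []) : sc (h ++ h.reverse) = 2 * sc h := by
  obtain rfl | ⟨u, x, rfl⟩ := h.eq_nil_or_concat
  · exact absurd rfl hne
  · simp only [List.concat_eq_append] at hne ⊢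
    have h1 : (u ++ [x]).reverse = x :: u.reverse := by simp
    rw [h1, show (u ++ [x]) ++ (x :: u.reverse) = u ++ (x :: x :: u.reverse) by simp]
    rw [sc_append u x x u.reverse]
    rw [if_neg (by nlinarith [mul_self_nonneg x])]
    rw [show (x :: u.reverse) = (u ++ [x]).reverse by simp, sc_reverse]
    omega

lemma sc_anti (h : List ℤ) (hne : h ≠ []) (hnz : ∀ y ∈ h, y ≠ 0) :
    sc (h ++ (h.reverse.map (fun x => -x))) = 2 * sc h + 1 := by
  obtain rfl | ⟨u, x, rfl⟩ := h.eq_nil_or_concat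
  · exact absurd rfl hne
  · simp only [List.concat_eq_append] at hne hnz ⊢
    have hx : x ≠ 0 := hnz x (by simp)
    have h1 : ((u ++ [x]).reverse).map (fun y => -y) = (-x) :: (u.reverse.map (fun y => -y)) := by
      simp
    rw [h1, show (u ++ [x]) ++ ((-x) :: (u.reverse.map (fun y => -y)))
        = u ++ (x :: (-x) :: (u.reverse.map (fun y => -y))) by simp]
    rw [sc_append u x (-x) (u.reverse.map (fun y => -y))]
    rw [if_pos (by rcases lt_or_gt_of_ne hx with h | h <;> nlinarith)]
    have h2 : ((-x) :: (u.reverse.map (fun y => -y))) = ((u ++ [x]).reverse).map (fun y => -y) := by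
      simp
    rw [h2, sc_neg, sc_reverse]
    omega

/-! ### epTot via Sset -/

lemma epTot_even (m : ℕ) : epTot (2 * m) = (Sset m).ncard := by
  have himg : Ecross (2 * m) ∩ {l | IsPalOrAnti l}
      = (fun h : List ℤ => h ++ h.reverse) '' Sset m := by
    apply Set.eq_of_subset_of_subset
    · rintro l ⟨⟨⟨hne, hev, hnz⟩, heq⟩, hpa⟩
      rcases hpa with hpal | hanti
      · obtain ⟨h, hh, rfl⟩ := pal_decomp _ hne hev hpal
        refine ⟨h, ⟨hh, fun x hx => hnz x (by simp [hx]), ?_⟩, rfl⟩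
        rw [← sc_eq, sc_pal h hh, absSum_append, absSum_reverse] at heq
        push_cast at heq ⊢
        omega
      · obtain ⟨h, hh, rfl⟩ := anti_decomp _ hne hev hanti
        exfalso
        have hnz' : ∀ x ∈ h, x ≠ 0 := fun x hx => hnz x (by simp [hx])
        rw [← sc_eq, sc_anti h hh hnz', absSum_append, absSum_neg, absSum_reverse] at heq
        push_cast at heq
        omega
    · rintro l ⟨h, ⟨hh, hnz, heq⟩, rfl⟩
      refine ⟨⟨⟨by simp [hh], ?_, ?_⟩, ?_⟩, Or.inl (by simp)⟩
      · rw [List.length_append, List.length_reverse]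
        exact ⟨h.length, rfl⟩
      · intro x hx
        rw [List.mem_append, List.mem_reverse] at hx
        rcases hx with hx | hx <;> exact hnz x hx
      · rw [← sc_eq, sc_pal h hh, absSum_append, absSum_reverse]
        push_cast at heq ⊢
        omega
  rw [epTot, himg]
  apply Set.ncard_image_of_injOn
  intro x hx y hy hxy
  have hlen : x.length = y.length := by
    have := congrArg List.length hxy
    simp at this
    omega
  exact (List.append_inj hxy hlen).1

lemma epTot_odd (m : ℕ) : epTot (2 * m + 1) = (Sset (m + 1)).ncard := by
  have himg : Ecross (2 * m + 1) ∩ {l | IsPalOrAnti l}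
      = (fun h : List ℤ => h ++ (h.reverse.map (fun x => -x))) '' Sset (m + 1) := by
    apply Set.eq_of_subset_of_subset
    · rintro l ⟨⟨⟨hne, hev, hnz⟩, heq⟩, hpa⟩
      rcases hpa with hpal | hanti
      · obtain ⟨h, hh, rfl⟩ := pal_decomp _ hne hev hpal
        exfalso
        rw [← sc_eq, sc_pal h hh, absSum_append, absSum_reverse] at heq
        push_cast at heq
        omega
      · obtain ⟨h, hh, rfl⟩ := anti_decomp _ hne hev hanti
        have hnz' : ∀ x ∈ h, x ≠ 0 := fun x hx => hnz x (by simp [hx])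
        refine ⟨h, ⟨hh, hnz', ?_⟩, rfl⟩
        rw [← sc_eq, sc_anti h hh hnz', absSum_append, absSum_neg, absSum_reverse] at heq
        push_cast at heq ⊢
        omega
    · rintro l ⟨h, ⟨hh, hnz, heq⟩, rfl⟩
      refine ⟨⟨⟨by simp [hh], ?_, ?_⟩, ?_⟩, Or.inr ?_⟩
      · rw [List.length_append, List.length_map, List.length_reverse]
        exact ⟨h.length, rfl⟩
      · intro x hx
        rw [List.mem_append] at hx
        rcases hx with hx | hx
        · exact hnz x hx
        · rw [List.mem_map] at hx
          obtain ⟨y, hy, rfl⟩ := hx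
          rw [List.mem_reverse] at hy
          simpa using hnz y hy
      · rw [← sc_eq, sc_anti h hh hnz, absSum_append, absSum_neg, absSum_reverse]
        push_cast at heq ⊢
        omega
      · simp [List.reverse_append, List.map_map, Function.comp_def]
  rw [epTot, himg]
  apply Set.ncard_image_of_injOn
  intro x hx y hy hxy
  have hlen : x.length = y.length := by
    have := congrArg List.length hxy
    simp at this
    omega
  exact (List.append_inj hxy hlen).1

theorem epTot_recursion (c : ℕ) (hc : 7 ≤ c) :
    epTot c = epTot (c - 2) + 2 * epTot (c - 4) := by
  rcases Nat.even_or_odd c with ⟨m, hm⟩ | ⟨m, hm⟩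
  · have hm4 : 4 ≤ m := by omega
    have h1 : epTot c = (Sset m).ncard := by
      rw [show c = 2 * m by omega]; exact epTot_even m
    have h2 : epTot (c - 2) = (Sset (m - 1)).ncard := by
      rw [show c - 2 = 2 * (m - 1) by omega]; exact epTot_even (m - 1)
    have h3 : epTot (c - 4) = (Sset (m - 2)).ncard := by
      rw [show c - 4 = 2 * (m - 2) by omega]; exact epTot_even (m - 2)
    rw [h1, h2, h3]
    exact N_rec m (by omega)
  · have hm3 : 3 ≤ m := by omega
    have h1 : epTot c = (Sset (m + 1)).ncard := by
      rw [show c = 2 * m + 1 by omega]; exact epTot_odd m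
    have h2 : epTot (c - 2) = (Sset m).ncard := by
      rw [show c - 2 = 2 * (m - 1) + 1 by omega, epTot_odd (m - 1),
        show m - 1 + 1 = m by omega]
    have h3 : epTot (c - 4) = (Sset (m - 1)).ncard := by
      rw [show c - 4 = 2 * (m - 2) + 1 by omega, epTot_odd (m - 2),
        show m - 2 + 1 = m - 1 by omega]
    rw [h1, h2, h3]
    have := N_rec (m + 1) (by omega)
    rwa [show m + 1 - 1 = m by omega, show m + 1 - 2 = m - 1 by omega] at this
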